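/- The identity t^(e) = v * τ(1,2,·) holds, where τ(1,2,n) = Σ_{ab²=n} 1 counts representations n = ab², and v is the multiplicative function with v(p) = v(p²) = v(p³) = 0 and v(p^a) = 2^{ω(a)} − 2^{ω(a−1)} − 2^{ω(a−2)} + 2^{ω(a−3)} for a ≥ 4. -/

import Mathlib

open Nat ArithmeticFunction Finset
open scoped Classical

/-- `t^(e)` as an arithmetic function: `t^(e)(p^a) = 2^{ω(a)}`. -/
noncomputable def tE : ArithmeticFunction ℤ :=
  ⟨fun n => if n = 0 then 0
    else ∏ p ∈ n.primeFactors, 2 ^ (n.factorization p).primeFactors.card, by simp⟩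

/-- `τ(1,2,n) = #{(a,b) : ab² = n}`, i.e. the number of `b` with `b² ∣ n`. -/
noncomputable def tau12 : ArithmeticFunction ℤ :=
  ⟨fun n => if n = 0 then 0
    else ((n.divisors.filter (fun b => b ^ 2 ∣ n)).card : ℤ), by simp⟩

namespace TEProof

lemma coprime_isSquare_mul {m n : ℕ} (h : m.Coprime n) :
    IsSquare (m * n) ↔ IsSquare m ∧ IsSquare n := by
  constructor
  · rintro ⟨c, hc⟩
    have hcd : c ∣ m * n := hc ▸ dvd_mul_right c c
    obtain ⟨y, z, hy, hz, rfl⟩ := Nat.dvd_mul.mp hcd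
    have key : m * n = y ^ 2 * z ^ 2 := by rw [hc]; ring
    have h1 : m ∣ y ^ 2 := by
      have : m ∣ y ^ 2 * z ^ 2 := key ▸ dvd_mul_right m n
      exact (Nat.Coprime.dvd_of_dvd_mul_right ((h.coprime_dvd_right hz).pow_right 2) this)
    have h2 : y ^ 2 ∣ m := by
      have hyn : (y ^ 2).Coprime n := ((h.symm.coprime_dvd_right hy).pow_right 2).symm
      have : y ^ 2 ∣ m * n := by rw [key]; exact dvd_mul_right _ _
      exact hyn.dvd_of_dvd_mul_right this
    have hm : m = y ^ 2 := Nat.dvd_antisymm h1 h2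
    have hn : n = z ^ 2 := by
      rcases eq_or_ne m 0 with rfl | hm0
      · have hn1 : n = 1 := Nat.coprime_zero_left n |>.mp h
        simp [hn1, Nat.eq_one_of_dvd_one (hn1 ▸ hz)]
      · have := key
        rw [hm] at this
        exact Nat.eq_of_mul_eq_mul_left (Nat.pos_of_ne_zero (hm ▸ hm0)) this
    exact ⟨⟨y, by rw [hm]; ring⟩, ⟨z, by rw [hn]; ring⟩⟩
  · rintro ⟨⟨a, ha⟩, ⟨b, hb⟩⟩
    exact ⟨a * b, by subst ha hb; ring⟩

/-- indicator of nonzero squares -/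
noncomputable def sqInd : ArithmeticFunction ℤ :=
  ⟨fun n => if n ≠ 0 ∧ IsSquare n then 1 else 0, by simp⟩

lemma sqInd_mult : sqInd.IsMultiplicative := by
  constructor
  · simp [sqInd]
  · intro m n h
    show (if _ then _ else _) = _
    rcases eq_or_ne m 0 with rfl | hm
    · simp [sqInd]
    rcases eq_or_ne n 0 with rfl | hn
    · simp [sqInd]
    simp only [sqInd, coe_mk, mul_ne_zero hm hn, hm, hn, ne_eq, not_false_iff, true_and,
      coprime_isSquare_mul h]
    by_cases h1 : IsSquare m <;> by_cases h2 : IsSquare n <;> simp [h1, h2]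

lemma prime_pow_isSquare {p : ℕ} (hp : p.Prime) (i : ℕ) : IsSquare (p ^ i) ↔ Even i := by
  constructor
  · rintro ⟨c, hc⟩
    have hc0 : c ≠ 0 := by
      rintro rfl; exact (pow_ne_zero i hp.ne_zero) (by simpa using hc)
    have := congrArg (fun x => x.factorization p) hc
    simp [hp.factorization_pow, Nat.factorization_mul hc0 hc0] at this
    exact ⟨c.factorization p, this⟩
  · rintro ⟨j, rfl⟩
    exact ⟨p ^ j, by ring⟩

lemma tau12_eq : tau12 = ((ArithmeticFunction.zeta : ArithmeticFunction ℕ) : ArithmeticFunction ℤ) * sqInd := by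
  ext n
  rcases eq_or_ne n 0 with rfl | hn
  · simp
  rw [coe_zeta_mul_apply]
  have htau : tau12 n = ((n.divisors.filter (fun b => b ^ 2 ∣ n)).card : ℤ) := if_neg hn
  rw [htau]
  have : ∑ i ∈ n.divisors, sqInd i = ∑ i ∈ n.divisors.filter (fun d => IsSquare d), 1 := by
    rw [Finset.sum_filter]
    apply Finset.sum_congr rfl
    intro d hd
    have hd0 : d ≠ 0 := Nat.pos_of_mem_divisors hd |>.ne'
    simp [sqInd, hd0]
  rw [this, Finset.sum_const, nsmul_eq_mul, mul_one]
  norm_cast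
  apply Finset.card_nbij (fun b => b ^ 2)
  · intro b hb
    simp only [Finset.mem_coe, Finset.mem_filter, Nat.mem_divisors] at hb ⊢
    exact ⟨⟨hb.2, hn⟩, ⟨b, by ring⟩⟩
  · intro a ha b hb hab
    exact Nat.pow_left_injective (by norm_num) hab
  · intro d hd
    simp only [Finset.mem_filter, Nat.mem_divisors, Finset.coe_filter, Set.mem_setOf_eq,
      Set.mem_image] at hd ⊢
    obtain ⟨⟨hdn, _⟩, c, hc⟩ := hd
    refine ⟨c, ?_, by rw [hc]; ring⟩
    have hcd : c ^ 2 = d := by rw [hc]; ring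
    exact ⟨⟨dvd_trans (dvd_trans ⟨c, hc⟩ dvd_rfl) hdn, hn⟩, hcd ▸ hdn⟩

lemma tau12_mult : tau12.IsMultiplicative := by
  rw [tau12_eq]
  exact (isMultiplicative_zeta.natCast).mul sqInd_mult

lemma even_sum (k : ℕ) :
    ∑ i ∈ range (k + 1), (if Even i then (1:ℤ) else 0) = (k / 2 : ℕ) + 1 := by
  induction k with
  | zero => rw [Finset.sum_range_one]; norm_num
  | succ k ih =>
    rw [Finset.sum_range_succ, ih]
    rcases Nat.even_or_odd (k+1) with h | h
    · rw [if_pos h]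
      obtain ⟨j, hj⟩ := h
      have h1 : (k+1)/2 = k/2 + 1 := by omega
      rw [h1]; push_cast; ring
    · rw [if_neg (Nat.not_even_iff_odd.mpr h)]
      obtain ⟨j, hj⟩ := h
      have h1 : (k+1)/2 = k/2 := by omega
      rw [h1]; ring

lemma tau12_prime_pow {p : ℕ} (hp : p.Prime) (k : ℕ) :
    tau12 (p ^ k) = ((k / 2 : ℕ) : ℤ) + 1 := by
  rw [tau12_eq, coe_zeta_mul_apply, Nat.sum_divisors_prime_pow hp]
  rw [← even_sum k]
  apply Finset.sum_congr rfl
  intro i _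
  have h0 : p ^ i ≠ 0 := pow_ne_zero i hp.ne_zero
  show (if _ then _ else _) = _
  simp only [h0, ne_eq, not_false_iff, true_and, prime_pow_isSquare hp i]

lemma tE_apply_prime_pow {p : ℕ} (hp : p.Prime) (a : ℕ) :
    tE (p ^ a) = 2 ^ a.primeFactors.card := by
  rcases eq_or_ne a 0 with rfl | ha
  · simp [tE]
  have h0 : p ^ a ≠ 0 := pow_ne_zero a hp.ne_zero
  have h1 : (p ^ a).primeFactors = {p} := by
    rw [Nat.primeFactors_pow p ha, hp.primeFactors]
  show (if _ then _ else _) = _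
  rw [if_neg h0, h1, Finset.prod_singleton, hp.factorization_pow, Finsupp.single_eq_same]

lemma tE_mult : tE.IsMultiplicative := by
  constructor
  · simp [tE]
  · intro m n h
    rcases eq_or_ne m 0 with rfl | hm
    · simp [tE]
    rcases eq_or_ne n 0 with rfl | hn
    · simp [tE]
    have hmn : m * n ≠ 0 := mul_ne_zero hm hn
    show (if _ then _ else _) = (if _ then _ else _) * (if _ then _ else _)
    rw [if_neg hmn, if_neg hm, if_neg hn]
    rw [Nat.primeFactors_mul hm hn, Finset.prod_union (Nat.Coprime.disjoint_primeFactors h)]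
    congr 1
    · apply Finset.prod_congr rfl
      intro p hp
      have hpn : ¬ p ∣ n := fun hd =>
        (Nat.prime_of_mem_primeFactors hp).one_lt.ne'
          ((Nat.Coprime.coprime_dvd_left (Nat.dvd_of_mem_primeFactors hp) h).eq_one_of_dvd hd)
      rw [Nat.factorization_mul hm hn]
      simp [Nat.factorization_eq_zero_of_not_dvd hpn]
    · apply Finset.prod_congr rfl
      intro p hp
      have hpm : ¬ p ∣ m := fun hd =>
        (Nat.prime_of_mem_primeFactors hp).one_lt.ne'
          ((Nat.Coprime.coprime_dvd_left (Nat.dvd_of_mem_primeFactors hp) h.symm).eq_one_of_dvd hd)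
      rw [Nat.factorization_mul hm hn]
      simp [Nat.factorization_eq_zero_of_not_dvd hpm]

noncomputable def fE (k : ℕ) : ℤ := 2 ^ k.primeFactors.card

noncomputable def wE (a : ℕ) : ℤ :=
  if a = 0 then 1 else if a ≤ 3 then 0
  else fE a - fE (a - 1) - fE (a - 2) + fE (a - 3)

lemma fE0 : fE 0 = 1 := by simp [fE]
lemma fE1 : fE 1 = 1 := by simp [fE]
lemma fE2 : fE 2 = 2 := by
  simp [fE, Nat.Prime.primeFactors Nat.prime_two]
lemma fE3 : fE 3 = 2 := by
  simp [fE, Nat.Prime.primeFactors Nat.prime_three]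

lemma wE_eq {a : ℕ} (ha : 3 ≤ a) :
    wE a = fE a - fE (a - 1) - fE (a - 2) + fE (a - 3) := by
  rcases eq_or_lt_of_le ha with rfl | h
  · show wE 3 = _
    norm_num [wE, fE0, fE1, fE2, fE3]
  · unfold wE
    rw [if_neg (by omega), if_neg (by omega)]

lemma sum_wE {m : ℕ} (hm : 2 ≤ m) :
    ∑ i ∈ range (m + 1), wE i = fE m - fE (m - 2) := by
  induction m, hm using Nat.le_induction with
  | base =>
    rw [show (2:ℕ)+1 = 3 from rfl, Finset.sum_range_succ, Finset.sum_range_succ,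
      Finset.sum_range_one]
    norm_num [wE, fE0, fE2]
  | succ m hm ih =>
    rw [Finset.sum_range_succ, ih, wE_eq (by omega)]
    have h1 : m + 1 - 1 = m := by omega
    have h2 : m + 1 - 2 = m - 1 := by omega
    have h3 : m + 1 - 3 = m - 2 := by omega
    rw [h1, h2, h3]; ring

lemma core (a : ℕ) :
    ∑ i ∈ range (a + 1), wE i * (((a - i) / 2 : ℕ) + 1 : ℤ) = fE a := by
  induction a using Nat.strong_induction_on with
  | _ a ih =>
  match a, ih with
  | 0, _ => norm_num [wE, fE0]
  | 1, _ =>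
    rw [Finset.sum_range_succ, Finset.sum_range_one]
    norm_num [wE, fE1]
  | 2, _ =>
    rw [Finset.sum_range_succ, Finset.sum_range_succ, Finset.sum_range_one]
    norm_num [wE, fE2]
  | 3, _ =>
    rw [Finset.sum_range_succ, Finset.sum_range_succ, Finset.sum_range_succ,
      Finset.sum_range_one]
    norm_num [wE, fE3]
  | (b+4), ih =>
    have key : ∀ i ∈ range (b + 3), wE i * (((b + 4 - i) / 2 : ℕ) + 1 : ℤ) =
        wE i * (((b + 2 - i) / 2 : ℕ) + 1 : ℤ) + wE i := by
      intro i hi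
      rw [Finset.mem_range] at hi
      have : (b + 4 - i) / 2 = (b + 2 - i) / 2 + 1 := by omega
      rw [this]; push_cast; ring
    rw [show b + 4 + 1 = (b + 3) + 1 + 1 from rfl, Finset.sum_range_succ,
      Finset.sum_range_succ, Finset.sum_congr rfl key, Finset.sum_add_distrib,
      ih (b + 2) (by omega)]
    have hA : ∑ i ∈ range (b + 3), wE i = fE (b + 2) - fE b := by
      have := sum_wE (m := b + 2) (by omega)
      simpa using this
    have h34 : b + 4 - (b + 3) = 1 := by omega
    have h44 : b + 4 - (b + 4) = 0 := by omega
    rw [hA, h34, h44, wE_eq (show 3 ≤ b + 3 by omega), wE_eq (show 3 ≤ b + 4 by omega)]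
    have e1 : b + 3 - 1 = b + 2 := by omega
    have e2 : b + 3 - 2 = b + 1 := by omega
    have e3 : b + 3 - 3 = b := by omega
    have e4 : b + 4 - 1 = b + 3 := by omega
    have e5 : b + 4 - 2 = b + 2 := by omega
    have e6 : b + 4 - 3 = b + 1 := by omega
    rw [e1, e2, e3, e4, e5, e6]
    norm_num
    ring

end TEProof

open TEProof

theorem tE_eq_v_conv_tau12 (v : ArithmeticFunction ℤ) (hv : v.IsMultiplicative)
    (hval : ∀ p : ℕ, p.Prime →
      v p = 0 ∧ v (p ^ 2) = 0 ∧ v (p ^ 3) = 0 ∧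
        ∀ a : ℕ, 4 ≤ a →
          v (p ^ a) =
            2 ^ a.primeFactors.card - 2 ^ (a - 1).primeFactors.card -
              2 ^ (a - 2).primeFactors.card + 2 ^ (a - 3).primeFactors.card) :
    tE = v * tau12 := by
  rw [ArithmeticFunction.IsMultiplicative.eq_iff_eq_on_prime_powers tE tE_mult (v * tau12) (hv.mul tau12_mult)]
  intro p a hp
  obtain ⟨hv1, hv2, hv3, hv4⟩ := hval p hp
  have hvw : ∀ i : ℕ, v (p ^ i) = wE i := by
    intro i
    match i with
    | 0 => simpa [wE] using hv.map_one
    | 1 => simpa [wE] using hv1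
    | 2 => simpa [wE] using hv2
    | 3 => simpa [wE] using hv3
    | (j+4) =>
      rw [hv4 (j+4) (by omega), wE_eq (by omega)]
      rfl
  rw [tE_apply_prime_pow hp a, ArithmeticFunction.mul_apply,
    Nat.sum_divisorsAntidiagonal (fun x y => v x * tau12 y),
    Nat.sum_divisors_prime_pow hp]
  have step : ∀ i ∈ range (a + 1),
      v (p ^ i) * tau12 (p ^ a / p ^ i) = wE i * (((a - i) / 2 : ℕ) + 1 : ℤ) := by
    intro i hi
    rw [Finset.mem_range] at hi
    rw [Nat.pow_div (by omega) hp.pos, tau12_prime_pow hp, hvw i]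
  rw [Finset.sum_congr rfl step, core a]
  rfl
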